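/- Let ≻ be a relation on typed terms and define, for data types σ, that a neutral term s of type σ is computable iff every term t with s ≻ t is computable; and for arrow types, the logical-relation clause. If every computable term is strongly normalizing for ≻ (at smaller types, by induction on a well-founded type order), then every computable term of arrow type σ = θ→τ is strongly normalizing for the restriction of ≻ to comparisons whose types stay equivalent to σ, provided ≻ is monotonic under application and variables are computable. -/
import Mathlib


inductive Ty (S : Type) : Type
  | sort : S → Ty S
  | arrow : Ty S → Ty S → Ty S

theorem stmt9 {S Term : Type}
    (eqv : Ty S → Ty S → Prop)             -- equivalence of the type ordering
    (succ : Term → Term → Prop)            -- the term ordering ≻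
    (app : Term → Term → Term)
    (typeOf : Term → Ty S)
    (C : Ty S → Set Term)                  -- candidate interpretations
    -- logical-relation clause at arrow types
    (harrow : ∀ (ρ τ : Ty S) (s : Term),
      s ∈ C (Ty.arrow ρ τ) ↔ ∀ t ∈ C ρ, app s t ∈ C τ)
    -- ≻ is monotonic under application
    (hmono : ∀ s t u, succ s t → succ (app s u) (app t u))
    -- variables are computable: every type has a computable inhabitant
    (hvar : ∀ σ : Ty S, ∃ x : Term, x ∈ C σ)
    (θ τ : Ty S)
    -- at the smaller type τ, computable terms are strongly normalizing for ≻
    (hSN : ∀ t ∈ C τ, Acc (fun a b => succ b a) t) :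
    -- every computable term of arrow type θ→τ is strongly normalizing for the
    -- restriction of ≻ to comparisons whose types stay equivalent to θ→τ
    ∀ s ∈ C (Ty.arrow θ τ),
      Acc (fun a b => succ b a ∧ eqv (typeOf b) (Ty.arrow θ τ) ∧
        eqv (typeOf a) (Ty.arrow θ τ)) s := by
  obtain ⟨x, hx⟩ := hvar θ
  intro s hs
  have hacc : Acc (fun a b => succ b a) (app s x) :=
    hSN _ ((harrow θ τ s).mp hs x hx)
  have key : ∀ u, Acc (fun a b => succ b a) u → ∀ s, u = app s x →
      Acc (fun a b => succ b a ∧ eqv (typeOf b) (Ty.arrow θ τ) ∧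
        eqv (typeOf a) (Ty.arrow θ τ)) s := by
    intro u hu
    induction hu with
    | intro u _ ih =>
      rintro s rfl
      exact Acc.intro s fun t ⟨hst, _, _⟩ => ih (app t x) (hmono s t x hst) t rfl
  exact key _ hacc s rfl
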